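/- Let R = ℂ[x_1,…,x_n], let I ⊆ R be a homogeneous ideal and let g ∈ R be a nonzero homogeneous polynomial of degree e. Then for every d ≥ e, the contraction of the truncated dual space satisfies g∘D_0^d[I] = D_0^{d−e}[I : ⟨g⟩]; that is, { g∘q : q ∈ D_0^d[I] } equals the truncated dual space of order d − e of the colon ideal I : ⟨g⟩. -/

import Mathlib

open MvPolynomial

noncomputable section

/-- Apolarity pairing `⟨q, f⟩ = ∑ α (coeff α q) * (coeff α f)`. -/
def apair {n : ℕ} (q f : MvPolynomial (Fin n) ℂ) : ℂ :=
  ∑ α ∈ q.support, q.coeff α * f.coeff α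

lemma apair_eq_sum {n : ℕ} {q : MvPolynomial (Fin n) ℂ} {s : Finset (Fin n →₀ ℕ)}
    (h : q.support ⊆ s) (f : MvPolynomial (Fin n) ℂ) :
    apair q f = ∑ α ∈ s, q.coeff α * f.coeff α :=
  Finset.sum_subset h (fun α _ hα => by
    rw [MvPolynomial.notMem_support_iff.mp hα, zero_mul])

/-- The Macaulay dual space `D_0[I]` of an ideal at the origin. -/
def dualSpace {n : ℕ} (I : Ideal (MvPolynomial (Fin n) ℂ)) :
    Submodule ℂ (MvPolynomial (Fin n) ℂ) where
  carrier := {q | ∀ f ∈ I, apair q f = 0}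
  zero_mem' := by intro f hf; simp [apair]
  add_mem' := by
    intro a b ha hb f hf
    have h : apair (a + b) f = apair a f + apair b f := by
      rw [apair_eq_sum (s := a.support ∪ b.support) MvPolynomial.support_add,
        apair_eq_sum (s := a.support ∪ b.support) Finset.subset_union_left,
        apair_eq_sum (s := a.support ∪ b.support) Finset.subset_union_right,
        ← Finset.sum_add_distrib]
      exact Finset.sum_congr rfl fun α _ => by rw [coeff_add, add_mul]
    rw [h, ha f hf, hb f hf, add_zero]
  smul_mem' := by
    intro c q hq f hf
    have h : apair (c • q) f = c * apair q f := by
      rw [apair_eq_sum (s := q.support) MvPolynomial.support_smul, apair, Finset.mul_sum]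
      exact Finset.sum_congr rfl fun α _ => by rw [coeff_smul, smul_eq_mul, mul_assoc]
    rw [h, hq f hf, mul_zero]

open scoped Classical in
/-- The contraction `g ∘ q`, realizing the action of `g` on differential functionals:
`coeff α (contract g q) = ∑ β, coeff β g * coeff (α + β) q`. -/
def contract {n : ℕ} (g q : MvPolynomial (Fin n) ℂ) : MvPolynomial (Fin n) ℂ :=
  ∑ β ∈ g.support, ∑ α ∈ q.support,
    if β ≤ α then monomial (α - β) (g.coeff β * q.coeff α) else 0

/-- The truncated dual space `D_0^k[I]`. -/
def truncDual {n : ℕ} (k : ℕ) (I : Ideal (MvPolynomial (Fin n) ℂ)) :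
    Submodule ℂ (MvPolynomial (Fin n) ℂ) where
  carrier := {q | q ∈ dualSpace I ∧ q.totalDegree ≤ k}
  zero_mem' := ⟨(dualSpace I).zero_mem, by simp⟩
  add_mem' := fun ha hb => ⟨(dualSpace I).add_mem ha.1 hb.1,
    le_trans (MvPolynomial.totalDegree_add _ _) (max_le ha.2 hb.2)⟩
  smul_mem' := fun c q hq => ⟨(dualSpace I).smul_mem c hq.1,
    le_trans (MvPolynomial.totalDegree_smul_le c q) hq.2⟩

open scoped Classical

namespace ContractAux

variable {n : ℕ}

abbrev R (n : ℕ) := MvPolynomial (Fin n) ℂ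

lemma apair_comm (q f : R n) : apair q f = apair f q := by
  rw [apair_eq_sum (s := q.support ∪ f.support) Finset.subset_union_left,
      apair_eq_sum (s := q.support ∪ f.support) Finset.subset_union_right]
  exact Finset.sum_congr rfl fun α _ => mul_comm _ _

lemma apair_add_left (a b f : R n) : apair (a + b) f = apair a f + apair b f := by
  rw [apair_eq_sum (s := a.support ∪ b.support) MvPolynomial.support_add,
    apair_eq_sum (s := a.support ∪ b.support) Finset.subset_union_left,
    apair_eq_sum (s := a.support ∪ b.support) Finset.subset_union_right,
    ← Finset.sum_add_distrib]
  exact Finset.sum_congr rfl fun α _ => by rw [MvPolynomial.coeff_add, add_mul]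

lemma apair_smul_left (c : ℂ) (q f : R n) : apair (c • q) f = c * apair q f := by
  rw [apair_eq_sum (s := q.support) MvPolynomial.support_smul, apair, Finset.mul_sum]
  exact Finset.sum_congr rfl fun α _ => by
    rw [MvPolynomial.coeff_smul, smul_eq_mul, mul_assoc]

lemma apair_add_right (q a b : R n) : apair q (a + b) = apair q a + apair q b := by
  rw [apair_comm, apair_add_left, apair_comm a q, apair_comm b q]

lemma apair_smul_right (c : ℂ) (q f : R n) : apair q (c • f) = c * apair q f := by
  rw [apair_comm, apair_smul_left, apair_comm f q]

lemma apair_monomial_right (q : R n) (c : Fin n →₀ ℕ) (t : ℂ) :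
    apair q (MvPolynomial.monomial c t) = q.coeff c * t := by
  rw [apair]
  rw [Finset.sum_eq_single c]
  · rw [MvPolynomial.coeff_monomial, if_pos rfl]
  · intro b _ hb
    rw [MvPolynomial.coeff_monomial, if_neg (Ne.symm hb), mul_zero]
  · intro h
    rw [MvPolynomial.notMem_support_iff.mp h, zero_mul]

lemma contract_coeff (g q : R n) (γ : Fin n →₀ ℕ) :
    (contract g q).coeff γ = ∑ β ∈ g.support, g.coeff β * q.coeff (γ + β) := by
  rw [contract]
  rw [MvPolynomial.coeff_sum]
  refine Finset.sum_congr rfl fun β _ => ?_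
  rw [MvPolynomial.coeff_sum]
  have : ∀ α ∈ q.support,
      MvPolynomial.coeff γ (if β ≤ α then MvPolynomial.monomial (α - β)
        (g.coeff β * q.coeff α) else 0) =
      if α = γ + β then g.coeff β * q.coeff α else 0 := by
    intro α _
    by_cases h2 : α = γ + β
    · subst h2
      rw [if_pos rfl, if_pos le_add_self, MvPolynomial.coeff_monomial,
        if_pos (by simp)]
    · rw [if_neg h2]
      split_ifs with h1
      · rw [MvPolynomial.coeff_monomial,
          if_neg (fun hc => h2 (by rw [← hc, tsub_add_cancel_of_le h1]))]
      · exact MvPolynomial.coeff_zero _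
  rw [Finset.sum_congr rfl this, Finset.sum_ite_eq' q.support (γ + β)]
  split_ifs with h
  · rfl
  · rw [MvPolynomial.notMem_support_iff.mp h, mul_zero]

end ContractAux
namespace ContractAux

variable {n : ℕ}

lemma contract_coeff_superset {g : R n} {s : Finset (Fin n →₀ ℕ)} (h : g.support ⊆ s)
    (q : R n) (γ : Fin n →₀ ℕ) :
    (contract g q).coeff γ = ∑ β ∈ s, g.coeff β * q.coeff (γ + β) := by
  rw [contract_coeff]
  exact Finset.sum_subset h fun β _ hβ => by
    rw [MvPolynomial.notMem_support_iff.mp hβ, zero_mul]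

lemma contract_add_right (g a b : R n) :
    contract g (a + b) = contract g a + contract g b := by
  ext γ
  simp only [MvPolynomial.coeff_add, contract_coeff, MvPolynomial.coeff_add,
    ← Finset.sum_add_distrib]
  exact Finset.sum_congr rfl fun β _ => by ring

lemma contract_smul_right (g : R n) (c : ℂ) (q : R n) :
    contract g (c • q) = c • contract g q := by
  ext γ
  simp only [MvPolynomial.coeff_smul, contract_coeff, Finset.smul_sum]
  exact Finset.sum_congr rfl fun β _ => by
    rw [smul_eq_mul, smul_eq_mul]; ring

/-- Adjointness: `⟨g∘q, f⟩ = ⟨q, g·f⟩`. -/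
lemma apair_contract (g q f : R n) : apair (contract g q) f = apair q (g * f) := by
  induction f using MvPolynomial.induction_on' with
  | add p r hp hr =>
    rw [apair_add_right, mul_add, apair_add_right, hp, hr]
  | monomial c t =>
    rw [apair_monomial_right]
    rw [contract_coeff]
    -- RHS
    have hR : apair q (g * MvPolynomial.monomial c t) =
        ∑ α ∈ (g.support.image (fun β => c + β)) ∪ q.support,
          (if c ≤ α then q.coeff α * (g.coeff (α - c) * t) else 0) := by
      rw [apair_eq_sum (s := (g.support.image (fun β => c + β)) ∪ q.support)
        Finset.subset_union_right]
      refine Finset.sum_congr rfl fun α _ => ?_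
      rw [MvPolynomial.coeff_mul_monomial']
      split_ifs with h
      · ring
      · rw [mul_zero]
    rw [hR]
    have hL : (∑ β ∈ g.support, g.coeff β * q.coeff (c + β)) * t =
        ∑ α ∈ g.support.image (fun β => c + β),
          (if c ≤ α then q.coeff α * (g.coeff (α - c) * t) else 0) := by
      rw [Finset.sum_mul, Finset.sum_image (fun x _ y _ h => by
        simpa using congrArg (fun z => z - c) h)]
      refine Finset.sum_congr rfl fun β _ => ?_
      rw [if_pos le_self_add]
      simp only [add_tsub_cancel_left]
      ring
    rw [hL]
    refine Finset.sum_subset Finset.subset_union_left fun α _ hα => ?_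
    split_ifs with h
    · have hz : g.coeff (α - c) = 0 := by
        by_contra hne
        exact hα (Finset.mem_image.mpr ⟨α - c, MvPolynomial.mem_support_iff.mpr hne,
          add_tsub_cancel_of_le h⟩)
      rw [hz, zero_mul, mul_zero]
    · rfl

end ContractAux
namespace ContractAux

variable {n : ℕ}

lemma degree_sum_eq (s : Fin n →₀ ℕ) : (s.sum fun _ e => e) = s.degree := rfl

lemma degree_add (a b : Fin n →₀ ℕ) : (a + b).degree = a.degree + b.degree := by
  simp [Finsupp.degree_eq_weight_one, map_add]

/-- Degree bound for contraction by a homogeneous polynomial. -/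
lemma totalDegree_contract_le {g : R n} {e : ℕ} (hge : g.IsHomogeneous e)
    {q : R n} {d : ℕ} (hq : q.totalDegree ≤ d) :
    (contract g q).totalDegree ≤ d - e := by
  refine Finset.sup_le fun γ hγ => ?_
  rw [degree_sum_eq]
  have hc : (contract g q).coeff γ ≠ 0 := MvPolynomial.mem_support_iff.mp hγ
  rw [contract_coeff] at hc
  obtain ⟨β, hβ, hne⟩ := Finset.exists_ne_zero_of_sum_ne_zero hc
  have hgb : g.coeff β ≠ 0 := fun h => hne (by rw [h, zero_mul])
  have hqb : q.coeff (γ + β) ≠ 0 := fun h => hne (by rw [h, mul_zero])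
  have hβe : β.degree = e := by
    rw [Finsupp.degree_eq_weight_one]; exact hge hgb
  have hmem := MvPolynomial.le_totalDegree (MvPolynomial.mem_support_iff.mpr hqb)
  rw [degree_sum_eq] at hmem
  have hle : (γ + β).degree ≤ d := le_trans hmem hq
  rw [degree_add, hβe] at hle
  omega

/-- Truncation of a polynomial to total degree at most `k`. -/
def trunc (k : ℕ) (f : R n) : R n :=
  ∑ i ∈ Finset.range (k + 1), MvPolynomial.homogeneousComponent i f

lemma coeff_trunc (k : ℕ) (f : R n) (α : Fin n →₀ ℕ) :
    (trunc k f).coeff α = if α.degree ≤ k then f.coeff α else 0 := by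
  rw [trunc, MvPolynomial.coeff_sum]
  simp only [MvPolynomial.coeff_homogeneousComponent]
  rw [Finset.sum_ite_eq (Finset.range (k + 1)) α.degree (fun _ => f.coeff α)]
  simp [Nat.lt_succ_iff]

lemma totalDegree_trunc_le (k : ℕ) (f : R n) : (trunc k f).totalDegree ≤ k := by
  refine Finset.sup_le fun γ hγ => ?_
  rw [degree_sum_eq]
  have := MvPolynomial.mem_support_iff.mp hγ
  rw [coeff_trunc] at this
  by_contra h
  exact this (if_neg (by omega))

lemma apair_trunc {k : ℕ} {q : R n} (hq : q.totalDegree ≤ k) (f : R n) :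
    apair q (trunc k f) = apair q f := by
  refine Finset.sum_congr rfl fun α hα => ?_
  have hmem := MvPolynomial.le_totalDegree hα
  rw [degree_sum_eq] at hmem
  have hd : α.degree ≤ k := le_trans hmem hq
  rw [coeff_trunc, if_pos hd]

lemma trunc_mem {I : Ideal (R n)} (hI : ∀ f ∈ I, ∀ m : ℕ,
    MvPolynomial.homogeneousComponent m f ∈ I) {f : R n} (hf : f ∈ I) (k : ℕ) :
    trunc k f ∈ I :=
  Ideal.sum_mem I fun i _ => hI f hf i

/-- Membership in the truncated dual only requires testing against
low-degree elements of the (homogeneous) ideal. -/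
lemma mem_truncDual_iff {I : Ideal (R n)} (hI : ∀ f ∈ I, ∀ m : ℕ,
    MvPolynomial.homogeneousComponent m f ∈ I) {k : ℕ} {q : R n} :
    q ∈ truncDual k I ↔ q.totalDegree ≤ k ∧
      ∀ f ∈ I, f.totalDegree ≤ k → apair q f = 0 := by
  constructor
  · exact fun h => ⟨h.2, fun f hf _ => h.1 f hf⟩
  · rintro ⟨hdeg, h⟩
    refine ⟨fun f hf => ?_, hdeg⟩
    rw [← apair_trunc hdeg f]
    exact h _ (trunc_mem hI hf k) (totalDegree_trunc_le k f)

/-- The colon ideal of a homogeneous ideal by a homogeneous element is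
stable under taking homogeneous components. -/
lemma colon_homogeneous {I : Ideal (R n)} (hI : ∀ f ∈ I, ∀ m : ℕ,
    MvPolynomial.homogeneousComponent m f ∈ I) {g : R n} {e : ℕ}
    (hge : g.IsHomogeneous e) :
    ∀ f ∈ Submodule.colon I (Ideal.span {g}), ∀ m : ℕ,
      MvPolynomial.homogeneousComponent m f ∈ Submodule.colon I (Ideal.span {g}) := by
  intro f hf m
  rw [Submodule.mem_colon_span_singleton] at hf ⊢
  rw [smul_eq_mul] at hf ⊢
  have key : MvPolynomial.homogeneousComponent m f * g =
      MvPolynomial.homogeneousComponent (m + e) (f * g) := by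
    conv_rhs => rw [← MvPolynomial.sum_homogeneousComponent f]
    rw [Finset.sum_mul, map_sum]
    have : ∀ i ∈ Finset.range (f.totalDegree + 1),
        MvPolynomial.homogeneousComponent (m + e) (MvPolynomial.homogeneousComponent i f * g)
          = if m + e = i + e then MvPolynomial.homogeneousComponent i f * g else 0 := by
      intro i _
      exact MvPolynomial.homogeneousComponent_of_mem
        ((MvPolynomial.homogeneousComponent_isHomogeneous i f).mul hge)
    rw [Finset.sum_congr rfl this]
    have : ∀ i ∈ Finset.range (f.totalDegree + 1),
        (if m + e = i + e then MvPolynomial.homogeneousComponent i f * g else 0)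
          = if i = m then MvPolynomial.homogeneousComponent i f * g else 0 := by
      intro i _
      refine if_congr ?_ rfl rfl
      omega
    rw [Finset.sum_congr rfl this, Finset.sum_ite_eq' (Finset.range (f.totalDegree + 1)) m]
    split_ifs with h
    · rfl
    · have hlt : f.totalDegree < m := by
        simp only [Finset.mem_range, Nat.lt_succ_iff, not_le] at h
        exact h
      rw [MvPolynomial.homogeneousComponent_eq_zero m f hlt, zero_mul]
  rw [key]
  exact hI _ hf _

end ContractAux
namespace ContractAux

variable {n : ℕ}

lemma apair_smul_left' (c : ℂ) (q f : R n) : apair (c • q) f = c • apair q f := by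
  rw [apair_smul_left, smul_eq_mul]

lemma apair_smul_right' (c : ℂ) (q f : R n) : apair q (c • f) = c • apair q f := by
  rw [apair_smul_right, smul_eq_mul]

/-- The apolarity pairing as a bilinear form. -/
def apB (n : ℕ) : LinearMap.BilinForm ℂ (R n) :=
  LinearMap.mk₂ ℂ apair apair_add_left apair_smul_left' apair_add_right apair_smul_right'

@[simp] lemma apB_apply (q f : R n) : apB n q f = apair q f := rfl

abbrev Wk (n k : ℕ) := MvPolynomial.restrictTotalDegree (Fin n) ℂ k

/-- Restriction of the apolarity form to polynomials of degree at most `k`. -/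
def apBres (n k : ℕ) : LinearMap.BilinForm ℂ (Wk n k) := (apB n).restrict (Wk n k)

@[simp] lemma apBres_apply (k : ℕ) (q f : Wk n k) :
    apBres n k q f = apair (q : R n) (f : R n) := rfl

lemma apBres_isRefl (k : ℕ) : (apBres n k).IsRefl := by
  intro q f h
  rw [apBres_apply, apair_comm] at h
  exact h

lemma apBres_nondegenerate (k : ℕ) : (apBres n k).Nondegenerate := by
  have hL : LinearMap.SeparatingLeft (apBres n k) := by
    intro q h
    ext1
    rw [Submodule.coe_zero]
    ext α
    rw [MvPolynomial.coeff_zero]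
    by_cases hα : α ∈ (q : R n).support
    · have hmem : (MvPolynomial.monomial α (1 : ℂ)) ∈ Wk n k := by
        rw [MvPolynomial.mem_restrictTotalDegree]
        refine le_trans (MvPolynomial.totalDegree_monomial_le α 1) ?_
        exact le_trans (MvPolynomial.le_totalDegree hα)
          ((MvPolynomial.mem_restrictTotalDegree _ _ _).mp q.2)
      have := h ⟨_, hmem⟩
      rw [apBres_apply, apair_monomial_right, mul_one] at this
      exact this
    · exact MvPolynomial.notMem_support_iff.mp hα
  refine ⟨hL, fun f h => hL f fun q => ?_⟩
  rw [apBres_apply, apair_comm, ← apBres_apply]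
  exact h q

/-- The contraction by `g` as a linear map on truncated polynomial spaces. -/
def cmapL (g : R n) {e : ℕ} (hge : g.IsHomogeneous e) (d : ℕ) :
    Wk n d →ₗ[ℂ] Wk n (d - e) where
  toFun q := ⟨contract g (q : R n), by
    rw [MvPolynomial.mem_restrictTotalDegree]
    exact totalDegree_contract_le hge
      ((MvPolynomial.mem_restrictTotalDegree _ _ _).mp q.2)⟩
  map_add' a b := Subtype.ext (contract_add_right g _ _)
  map_smul' c q := Subtype.ext (contract_smul_right g c _)

@[simp] lemma cmapL_apply (g : R n) {e : ℕ} (hge : g.IsHomogeneous e) (d : ℕ)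
    (q : Wk n d) : ((cmapL g hge d q : Wk n (d - e)) : R n) = contract g (q : R n) := rfl

/-- Orthogonal complement characterization of the truncated dual space. -/
lemma mem_orth_iff {K : Ideal (R n)} (hK : ∀ f ∈ K, ∀ m : ℕ,
    MvPolynomial.homogeneousComponent m f ∈ K) (k : ℕ) (q : Wk n k) :
    q ∈ (apBres n k).orthogonal
        (Submodule.comap (Wk n k).subtype (K.restrictScalars ℂ)) ↔
      (q : R n) ∈ truncDual k K := by
  rw [LinearMap.BilinForm.mem_orthogonal_iff, mem_truncDual_iff hK]
  constructor
  · intro h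
    refine ⟨(MvPolynomial.mem_restrictTotalDegree _ _ _).mp q.2, fun f hf hdeg => ?_⟩
    have hfW : f ∈ Wk n k := (MvPolynomial.mem_restrictTotalDegree _ _ _).mpr hdeg
    have := h ⟨f, hfW⟩ (by simpa [Submodule.mem_comap] using hf)
    rw [apBres_apply, apair_comm] at this
    exact this
  · rintro ⟨-, h⟩ a ha
    rw [Submodule.mem_comap] at ha
    rw [apBres_apply, apair_comm]
    exact h _ ha ((MvPolynomial.mem_restrictTotalDegree _ _ _).mp a.2)

end ContractAux
namespace ContractAux

variable {n : ℕ}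

lemma mem_truncDual_def {k : ℕ} {I : Ideal (R n)} {q : R n} :
    q ∈ truncDual k I ↔ q ∈ dualSpace I ∧ q.totalDegree ≤ k := Iff.rfl

/-- The core duality claim: contraction maps the orthogonal complement of `I` onto the
orthogonal complement of the colon ideal. -/
lemma map_cmap_orth (I : Ideal (R n)) {g : R n} (hg : g ≠ 0) {e : ℕ} (hge : g.IsHomogeneous e) {d : ℕ} (hd : e ≤ d) :
    Submodule.map (cmapL g hge d)
      ((apBres n d).orthogonal
        (Submodule.comap (Wk n d).subtype (I.restrictScalars ℂ))) =
      (apBres n (d - e)).orthogonal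
        (Submodule.comap (Wk n (d - e)).subtype
          ((Submodule.colon I (Ideal.span {g})).restrictScalars ℂ)) := by
  set J := Submodule.colon I (Ideal.span {g}) with hJdef
  have hmul : ∀ v : R n, v ∈ Wk n (d - e) → g * v ∈ Wk n d := by
    intro v hv
    rw [MvPolynomial.mem_restrictTotalDegree] at hv ⊢
    refine le_trans (MvPolynomial.totalDegree_mul g v) ?_
    rw [hge.totalDegree hg]
    omega
  have hcolon : ∀ v : R n, v ∈ J ↔ g * v ∈ I := by
    intro v
    rw [hJdef, Submodule.mem_colon_span_singleton,
      smul_eq_mul, mul_comm]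
  apply le_antisymm
  · rw [Submodule.map_le_iff_le_comap]
    intro q hq
    rw [Submodule.mem_comap, LinearMap.BilinForm.mem_orthogonal_iff]
    intro c hc
    rw [Submodule.mem_comap, Submodule.restrictScalars_mem] at hc
    have hgc : g * (c : R n) ∈ I := (hcolon _).mp hc
    rw [LinearMap.BilinForm.mem_orthogonal_iff] at hq
    have h0 := hq ⟨g * (c : R n), hmul _ c.2⟩
      (by simp [Submodule.mem_comap, Submodule.restrictScalars_mem, hgc])
    rw [apBres_apply, apair_comm] at h0
    rw [apBres_apply, apair_comm, cmapL_apply,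
      apair_contract]
    exact h0
  · have h2 : (apBres n (d - e)).orthogonal
        (Submodule.map (cmapL g hge d)
          ((apBres n d).orthogonal
            (Submodule.comap (Wk n d).subtype (I.restrictScalars ℂ)))) ≤
        Submodule.comap (Wk n (d - e)).subtype (J.restrictScalars ℂ) := by
      intro v hv
      rw [LinearMap.BilinForm.mem_orthogonal_iff] at hv
      have hw : (⟨g * (v : R n), hmul _ v.2⟩ : Wk n d) ∈
          (apBres n d).orthogonal ((apBres n d).orthogonal
            (Submodule.comap (Wk n d).subtype (I.restrictScalars ℂ))) := by
        rw [LinearMap.BilinForm.mem_orthogonal_iff]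
        intro q hq
        have h0 := hv (cmapL g hge d q) (Submodule.mem_map_of_mem hq)
        rw [apBres_apply, cmapL_apply,
          apair_contract] at h0
        rw [apBres_apply]
        exact h0
      rw [LinearMap.BilinForm.orthogonal_orthogonal (apBres_nondegenerate d)
        (apBres_isRefl d)] at hw
      rw [Submodule.mem_comap, Submodule.restrictScalars_mem] at hw ⊢
      exact (hcolon _).mpr hw
    have h3 := LinearMap.BilinForm.orthogonal_le h2 (B := apBres n (d - e))
    rwa [LinearMap.BilinForm.orthogonal_orthogonal (apBres_nondegenerate (d - e))
      (apBres_isRefl (d - e))] at h3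

end ContractAux

/-- For a homogeneous ideal `I` and a nonzero homogeneous `g` of degree
`e`, for every `d ≥ e` one has `g ∘ D_0^d[I] = D_0^{d-e}[I : ⟨g⟩]`. -/
theorem contract_truncDual_of_homogeneous (n : ℕ) (I : Ideal (MvPolynomial (Fin n) ℂ))
    (hI : ∀ f ∈ I, ∀ d : ℕ, homogeneousComponent d f ∈ I)
    (g : MvPolynomial (Fin n) ℂ) (hg : g ≠ 0) (e : ℕ) (hge : g.IsHomogeneous e)
    (d : ℕ) (hd : e ≤ d) :
    contract g '' (truncDual d I : Set (MvPolynomial (Fin n) ℂ)) =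
      (truncDual (d - e) (Submodule.colon I (Ideal.span {g})) :
        Set (MvPolynomial (Fin n) ℂ)) := by
  classical
  have hJ := ContractAux.colon_homogeneous hI hge
  have claim := ContractAux.map_cmap_orth I hg hge hd
  ext p
  simp only [Set.mem_image, SetLike.mem_coe]
  constructor
  · rintro ⟨q, hq, rfl⟩
    have hqW : q ∈ ContractAux.Wk n d :=
      (MvPolynomial.mem_restrictTotalDegree _ _ _).mpr hq.2
    have h1 := (ContractAux.mem_orth_iff hI d ⟨q, hqW⟩).mpr hq
    have h2 := Submodule.mem_map_of_mem (f := ContractAux.cmapL g hge d) h1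
    rw [claim] at h2
    exact (ContractAux.mem_orth_iff hJ (d - e) _).mp h2
  · intro hp
    have hpV : p ∈ ContractAux.Wk n (d - e) :=
      (MvPolynomial.mem_restrictTotalDegree _ _ _).mpr hp.2
    have h1 := (ContractAux.mem_orth_iff hJ (d - e) ⟨p, hpV⟩).mpr hp
    rw [← claim] at h1
    obtain ⟨q, hq, hqe⟩ := Submodule.mem_map.mp h1
    refine ⟨(q : MvPolynomial (Fin n) ℂ), (ContractAux.mem_orth_iff hI d q).mp hq, ?_⟩
    rw [← ContractAux.cmapL_apply g hge d q, hqe]
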